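/- Let d ≥ 1 and let X : ℝ^d × Ω → ℝ be a jointly measurable random field on a probability space (Ω, ℱ, P) such that each X(x) follows the GEV distribution with parameters η ∈ ℝ, τ > 0, ξ ≠ 0. Let β be a positive integer with βξ < 1. Then, almost surely, the sample path x ↦ X(x, ω)^β is locally Lebesgue-integrable on ℝ^d. -/

import Mathlib

open MeasureTheory Set Real
open scoped ENNReal
set_option maxHeartbeats 1000000

/-- A random variable follows the GEV distribution with parameters `η ∈ ℝ`, `τ > 0`,
`ξ ≠ 0` if its CDF is `exp(-(1 + ξ(x-η)/τ)^(-1/ξ))` when `1 + ξ(x-η)/τ > 0`, `0` below the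
support when `ξ > 0`, and `1` above the support when `ξ < 0`. -/
def IsGEV {Ω : Type*} [MeasurableSpace Ω] (P : MeasureTheory.Measure Ω) (X : Ω → ℝ)
    (η τ ξ : ℝ) : Prop :=
  ∀ x : ℝ, P {ω | X ω ≤ x} =
    if 0 < 1 + ξ * (x - η) / τ then
      ENNReal.ofReal (Real.exp (-((1 + ξ * (x - η) / τ) ^ (-1 / ξ))))
    else if 0 < ξ then 0 else 1

lemma exp_neg_le_factorial_div {v : ℝ} (hv : 0 < v) (n : ℕ) :
    Real.exp (-v) ≤ (n.factorial : ℝ) / v ^ n := by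
  have hsum : v ^ n / (n.factorial : ℝ) ≤ Real.exp v := by
    calc v ^ n / (n.factorial : ℝ)
        ≤ ∑ i ∈ Finset.range (n + 1), v ^ i / (i.factorial : ℝ) := by
          refine Finset.single_le_sum (f := fun i => v ^ i / (i.factorial : ℝ))
            (fun i _ => by positivity) (Finset.self_mem_range_succ n)
      _ ≤ Real.exp v := Real.sum_le_exp_of_nonneg hv.le _
  rw [Real.exp_neg, inv_eq_one_div, div_le_div_iff₀ (Real.exp_pos v) (pow_pos hv n)]
  rw [div_le_iff₀ (by positivity : (0:ℝ) < (n.factorial : ℝ))] at hsum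
  nlinarith [hsum]

lemma gev_tail {Ω : Type*} [MeasurableSpace Ω] (P : Measure Ω) [IsProbabilityMeasure P]
    (η τ ξ : ℝ) (hτ : 0 < τ) (hξ : ξ ≠ 0) (β : ℕ) (hβ : 0 < β) (hβξ : (β : ℝ) * ξ < 1) :
    ∃ M C₀ r : ℝ, 1 ≤ M ∧ 0 ≤ C₀ ∧ (β : ℝ) < r ∧
      ∀ Y : Ω → ℝ, Measurable Y → IsGEV P Y η τ ξ →
        ∀ t : ℝ, M ≤ t → P {ω | t < |Y ω|} ≤ ENNReal.ofReal (C₀ * t ^ (-r)) := by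
  have habs : 0 < |ξ| := abs_pos.mpr hξ
  have hτξ : 0 < τ / |ξ| := div_pos hτ habs
  obtain ⟨M, hMdef⟩ : ∃ M : ℝ, M = 2 * |η| + τ / |ξ| + 1 := ⟨_, rfl⟩
  have hM1 : 1 ≤ M := by rw [hMdef]; linarith [abs_nonneg η]
  have hM0 : 0 < M := lt_of_lt_of_le one_pos hM1
  have hsub : ∀ (Y : Ω → ℝ) (t : ℝ),
      {ω | t < |Y ω|} ⊆ {ω | Y ω ≤ t}ᶜ ∪ {ω | Y ω ≤ -t} := by
    intro Y t ω hω
    have hω' : t < |Y ω| := hω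
    rcases lt_abs.mp hω' with h | h
    · exact Or.inl (by simpa using not_le.mpr h)
    · exact Or.inr (by simpa using (by linarith : Y ω ≤ -t))
  have hbound : ∀ (Y : Ω → ℝ), Measurable Y → ∀ t : ℝ,
      P {ω | t < |Y ω|} ≤ (1 - P {ω | Y ω ≤ t}) + P {ω | Y ω ≤ -t} := by
    intro Y hY t
    have hms : MeasurableSet {ω | Y ω ≤ t} := measurableSet_le hY measurable_const
    calc P {ω | t < |Y ω|} ≤ P ({ω | Y ω ≤ t}ᶜ ∪ {ω | Y ω ≤ -t}) :=
          measure_mono (hsub Y t)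
      _ ≤ P {ω | Y ω ≤ t}ᶜ + P {ω | Y ω ≤ -t} := measure_union_le _ _
      _ = (1 - P {ω | Y ω ≤ t}) + P {ω | Y ω ≤ -t} := by
          rw [measure_compl hms (measure_ne_top _ _), measure_univ]
  rcases hξ.lt_or_gt with hneg | hpos
  · -- ξ < 0
    obtain ⟨a, hadef⟩ : ∃ a : ℝ, a = -ξ := ⟨_, rfl⟩
    have hξa : ξ = -a := by rw [hadef]; ring
    have ha : 0 < a := by rw [hadef]; linarith
    have habsa : |ξ| = a := by rw [abs_of_neg hneg, hadef]
    obtain ⟨n, hndef⟩ : ∃ n : ℕ, n = ⌈(β : ℝ) * a⌉₊ + 1 := ⟨_, rfl⟩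
    obtain ⟨r, hrdef⟩ : ∃ r : ℝ, r = (n : ℝ) / a := ⟨_, rfl⟩
    obtain ⟨c, hcdef⟩ : ∃ c : ℝ, c = a / (2 * τ) := ⟨_, rfl⟩
    have hc : 0 < c := by rw [hcdef]; positivity
    refine ⟨M, (n.factorial : ℝ) * c ^ (-r), r, hM1, by positivity, ?_, ?_⟩
    · rw [hrdef, lt_div_iff₀ ha]
      calc (β : ℝ) * a ≤ (⌈(β : ℝ) * a⌉₊ : ℝ) := Nat.le_ceil _
        _ < (n : ℝ) := by rw [hndef]; push_cast; linarith
    intro Y hY hG t ht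
    have htM : 2 * |η| + τ / |ξ| + 1 ≤ t := by rw [← hMdef]; exact ht
    have ht1 : 1 ≤ t := by linarith [abs_nonneg η, hτξ.le]
    have ht0 : 0 < t := lt_of_lt_of_le one_pos ht1
    have hη2 : 2 * |η| ≤ t := by linarith [hτξ.le]
    have hdiva : a * (τ / |ξ|) = τ := by rw [habsa]; field_simp
    have hat : τ + 2 * a * |η| + a ≤ a * t := by
      have h4 := mul_le_mul_of_nonneg_left htM ha.le
      nlinarith [hdiva]
    have hb' : c * t ≤ 1 + ξ * (-t - η) / τ := by
      have hnum : 0 ≤ ξ * (-t - η) - a * t / 2 := by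
        rw [hξa]
        nlinarith [mul_le_mul_of_nonneg_left (neg_abs_le η) ha.le,
          mul_le_mul_of_nonneg_left hη2 ha.le]
      have e : ξ * (-t - η) / τ - c * t = (ξ * (-t - η) - a * t / 2) / τ := by
        rw [hcdef]; field_simp
      have h5 := div_nonneg hnum hτ.le
      rw [← e] at h5; linarith
    have hb'pos : 0 < 1 + ξ * (-t - η) / τ := lt_of_lt_of_le (by positivity) hb'
    have hkey2 : ¬ (0 < 1 + ξ * (t - η) / τ) := by
      have h1 : ξ * (t - η) ≤ -1 * τ := by
        have h2 : ξ * (t - η) = -(a * (t - η)) := by rw [hξa]; ring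
        rw [h2]
        nlinarith [mul_le_mul_of_nonneg_left (le_abs_self η) ha.le, abs_nonneg η,
          mul_nonneg ha.le (abs_nonneg η)]
      have h3 := (div_le_iff₀ hτ).mpr h1
      push_neg; linarith
    have hPup : P {ω | Y ω ≤ t} = 1 := by
      rw [hG t, if_neg hkey2, if_neg (not_lt.mpr hneg.le)]
    have hs : (-1 : ℝ) / ξ = 1 / a := by rw [hξa]; field_simp
    have hct : 0 < c * t := by positivity
    have hv : 0 < (c * t) ^ ((1 : ℝ) / a) := rpow_pos_of_pos hct _
    have hexp : Real.exp (-((1 + ξ * (-t - η) / τ) ^ (-1 / ξ))) ≤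
        (n.factorial : ℝ) * c ^ (-r) * t ^ (-r) := by
      have hmono : (c * t) ^ ((1 : ℝ) / a) ≤ (1 + ξ * (-t - η) / τ) ^ (-1 / ξ) := by
        rw [hs]; exact rpow_le_rpow hct.le hb' (by positivity)
      have h1 : Real.exp (-((1 + ξ * (-t - η) / τ) ^ (-1 / ξ))) ≤
          Real.exp (-((c * t) ^ ((1 : ℝ) / a))) := Real.exp_le_exp.mpr (by linarith)
      have h2 := exp_neg_le_factorial_div hv n
      have h3 : (n.factorial : ℝ) / ((c * t) ^ ((1 : ℝ) / a)) ^ n =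
          (n.factorial : ℝ) * c ^ (-r) * t ^ (-r) := by
        rw [← Real.rpow_natCast ((c * t) ^ ((1:ℝ)/a)) n, ← Real.rpow_mul hct.le]
        rw [div_eq_mul_inv, ← Real.rpow_neg hct.le]
        rw [show -((1:ℝ) / a * (n:ℝ)) = -r by rw [hrdef]; field_simp]
        rw [Real.rpow_neg hct.le, ← Real.rpow_neg hct.le]
        rw [Real.mul_rpow hc.le ht0.le, mul_assoc]
      linarith [h1, h3 ▸ h2]
    calc P {ω | t < |Y ω|} ≤ (1 - P {ω | Y ω ≤ t}) + P {ω | Y ω ≤ -t} := hbound Y hY t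
      _ = P {ω | Y ω ≤ -t} := by rw [hPup, tsub_self, zero_add]
      _ = ENNReal.ofReal (Real.exp (-((1 + ξ * (-t - η) / τ) ^ (-1 / ξ)))) := by
          rw [hG (-t), if_pos hb'pos]
      _ ≤ ENNReal.ofReal ((n.factorial : ℝ) * c ^ (-r) * t ^ (-r)) :=
          ENNReal.ofReal_le_ofReal hexp
      _ = ENNReal.ofReal ((n.factorial : ℝ) * c ^ (-r) * (t ^ (-r))) := by rw [mul_assoc]
  · -- ξ > 0
    have habsx : |ξ| = ξ := abs_of_pos hpos
    obtain ⟨r, hrdef⟩ : ∃ r : ℝ, r = 1 / ξ := ⟨_, rfl⟩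
    obtain ⟨c, hcdef⟩ : ∃ c : ℝ, c = ξ / (2 * τ) := ⟨_, rfl⟩
    have hc : 0 < c := by rw [hcdef]; positivity
    refine ⟨M, c ^ (-r), r, hM1, (rpow_pos_of_pos hc _).le, ?_, ?_⟩
    · rw [hrdef, lt_div_iff₀ hpos]; linarith [hβξ]
    intro Y hY hG t ht
    have htM : 2 * |η| + τ / |ξ| + 1 ≤ t := by rw [← hMdef]; exact ht
    have ht1 : 1 ≤ t := by linarith [abs_nonneg η, hτξ.le]
    have ht0 : 0 < t := lt_of_lt_of_le one_pos ht1
    have hη2 : 2 * |η| ≤ t := by linarith [hτξ.le]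
    have hdiva : ξ * (τ / |ξ|) = τ := by rw [habsx]; field_simp
    have hat : τ + 2 * ξ * |η| + ξ ≤ ξ * t := by
      have h4 := mul_le_mul_of_nonneg_left htM hpos.le
      nlinarith [hdiva]
    have hb : c * t ≤ 1 + ξ * (t - η) / τ := by
      have hnum : 0 ≤ ξ * (t - η) - ξ * t / 2 := by
        nlinarith [mul_le_mul_of_nonneg_left (le_abs_self η) hpos.le,
          mul_le_mul_of_nonneg_left hη2 hpos.le]
      have e : ξ * (t - η) / τ - c * t = (ξ * (t - η) - ξ * t / 2) / τ := by
        rw [hcdef]; field_simp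
      have h5 := div_nonneg hnum hτ.le
      rw [← e] at h5; linarith
    have hbpos : 0 < 1 + ξ * (t - η) / τ := lt_of_lt_of_le (by positivity) hb
    have hkey2 : ¬ (0 < 1 + ξ * (-t - η) / τ) := by
      have h1 : ξ * (-t - η) ≤ -1 * τ := by
        nlinarith [mul_le_mul_of_nonneg_left (neg_abs_le η) hpos.le, abs_nonneg η,
          mul_nonneg hpos.le (abs_nonneg η)]
      have h3 := (div_le_iff₀ hτ).mpr h1
      push_neg; linarith
    have hPlow : P {ω | Y ω ≤ -t} = 0 := by rw [hG (-t), if_neg hkey2, if_pos hpos]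
    have hu0 : 0 ≤ (1 + ξ * (t - η) / τ) ^ ((-1 : ℝ) / ξ) := rpow_nonneg hbpos.le _
    have hPup : (1 : ℝ≥0∞) - P {ω | Y ω ≤ t} ≤
        ENNReal.ofReal ((1 + ξ * (t - η) / τ) ^ ((-1 : ℝ) / ξ)) := by
      rw [hG t, if_pos hbpos]
      have h1 : (1 : ℝ≥0∞) - ENNReal.ofReal
            (Real.exp (-((1 + ξ * (t - η) / τ) ^ ((-1:ℝ) / ξ)))) =
          ENNReal.ofReal (1 - Real.exp (-((1 + ξ * (t - η) / τ) ^ ((-1:ℝ) / ξ)))) := by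
        rw [ENNReal.ofReal_sub _ (Real.exp_nonneg _), ENNReal.ofReal_one]
      rw [h1]
      apply ENNReal.ofReal_le_ofReal
      linarith [Real.add_one_le_exp (-((1 + ξ * (t - η) / τ) ^ ((-1:ℝ) / ξ)))]
    have humono : (1 + ξ * (t - η) / τ) ^ ((-1:ℝ) / ξ) ≤ c ^ (-r) * t ^ (-r) := by
      have hct : 0 < c * t := by positivity
      have hz : ((-1:ℝ) / ξ) ≤ 0 := by
        rw [neg_div]
        have : (0:ℝ) ≤ 1 / ξ := by positivity
        linarith
      have h1 : (1 + ξ * (t - η) / τ) ^ ((-1:ℝ) / ξ) ≤ (c * t) ^ ((-1:ℝ) / ξ) :=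
        rpow_le_rpow_of_nonpos hct hb hz
      calc (1 + ξ * (t - η) / τ) ^ ((-1:ℝ) / ξ) ≤ (c * t) ^ ((-1:ℝ) / ξ) := h1
        _ = c ^ (-r) * t ^ (-r) := by
            rw [Real.mul_rpow hc.le ht0.le, neg_div, ← hrdef]
    calc P {ω | t < |Y ω|} ≤ (1 - P {ω | Y ω ≤ t}) + P {ω | Y ω ≤ -t} := hbound Y hY t
      _ = 1 - P {ω | Y ω ≤ t} := by rw [hPlow, add_zero]
      _ ≤ ENNReal.ofReal ((1 + ξ * (t - η) / τ) ^ ((-1:ℝ) / ξ)) := hPup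
      _ ≤ ENNReal.ofReal (c ^ (-r) * t ^ (-r)) := ENNReal.ofReal_le_ofReal humono

lemma gev_moment {Ω : Type*} [MeasurableSpace Ω] (P : Measure Ω) [IsProbabilityMeasure P]
    (η τ ξ : ℝ) (hτ : 0 < τ) (hξ : ξ ≠ 0) (β : ℕ) (hβ : 0 < β) (hβξ : (β : ℝ) * ξ < 1) :
    ∃ C : ℝ≥0∞, C ≠ ⊤ ∧ ∀ Y : Ω → ℝ, Measurable Y → IsGEV P Y η τ ξ →
      ∫⁻ ω, ENNReal.ofReal ‖Y ω ^ β‖ ∂P ≤ C := by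
  obtain ⟨M, C₀, r, hM, hC₀, hr, htail⟩ := gev_tail P η τ ξ hτ hξ β hβ hβξ
  have hM0 : 0 < M := lt_of_lt_of_le one_pos hM
  have hβ1 : (0:ℝ) ≤ (β : ℝ) - 1 := by
    have : (1:ℝ) ≤ (β:ℝ) := by exact_mod_cast hβ
    linarith
  have hβ0 : (0:ℝ) < (β:ℝ) := by positivity
  obtain ⟨I2, hI2def⟩ : ∃ I2 : ℝ≥0∞,
      I2 = ∫⁻ t in Ioi M, ENNReal.ofReal (t ^ ((β:ℝ) - 1 - r)) := ⟨_, rfl⟩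
  have hI2top : I2 ≠ ⊤ := by
    have hq : ((β:ℝ) - 1 - r) < -1 := by linarith
    have hint : IntegrableOn (fun t : ℝ => t ^ ((β:ℝ) - 1 - r)) (Ioi M) :=
      integrableOn_Ioi_rpow_of_lt hq hM0
    have h2 := hint.2
    rw [hasFiniteIntegral_iff_norm] at h2
    have heq : I2 = ∫⁻ t in Ioi M, ENNReal.ofReal ‖t ^ ((β:ℝ) - 1 - r)‖ := by
      rw [hI2def]
      refine setLIntegral_congr_fun measurableSet_Ioi (fun t ht => ?_)
      rw [Real.norm_eq_abs, abs_of_nonneg (rpow_nonneg (le_of_lt (lt_trans hM0 ht)) _)]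
    rw [heq]
    exact h2.ne
  refine ⟨ENNReal.ofReal (β:ℝ) * (ENNReal.ofReal (M ^ ((β:ℝ) - 1)) * ENNReal.ofReal M +
    ENNReal.ofReal C₀ * I2), ?_, ?_⟩
  · exact ENNReal.mul_ne_top ENNReal.ofReal_ne_top (ENNReal.add_ne_top.mpr
      ⟨ENNReal.mul_ne_top ENNReal.ofReal_ne_top ENNReal.ofReal_ne_top,
       ENNReal.mul_ne_top ENNReal.ofReal_ne_top hI2top⟩)
  intro Y hY hG
  have h1 : ∀ ω, ENNReal.ofReal ‖Y ω ^ β‖ = ENNReal.ofReal (|Y ω| ^ (β:ℝ)) := by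
    intro ω
    rw [Real.norm_eq_abs, abs_pow, ← Real.rpow_natCast]
  simp_rw [h1]
  rw [lintegral_rpow_eq_lintegral_meas_lt_mul P (ae_of_all _ fun ω => abs_nonneg _)
    hY.abs.aemeasurable hβ0]
  apply mul_le_mul_right
  rw [← Ioc_union_Ioi_eq_Ioi hM0.le,
    lintegral_union measurableSet_Ioi (Ioc_disjoint_Ioi le_rfl)]
  apply add_le_add
  · -- piece 1
    calc ∫⁻ t in Ioc 0 M, P {a | t < |Y a|} * ENNReal.ofReal (t ^ ((β:ℝ) - 1))
        ≤ ∫⁻ _ in Ioc 0 M, ENNReal.ofReal (M ^ ((β:ℝ) - 1)) := by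
          refine setLIntegral_mono' measurableSet_Ioc fun t ht => ?_
          calc P {a | t < |Y a|} * ENNReal.ofReal (t ^ ((β:ℝ) - 1))
              ≤ 1 * ENNReal.ofReal (M ^ ((β:ℝ) - 1)) :=
                mul_le_mul' prob_le_one
                  (ENNReal.ofReal_le_ofReal (rpow_le_rpow ht.1.le ht.2 hβ1))
            _ = ENNReal.ofReal (M ^ ((β:ℝ) - 1)) := one_mul _
      _ = ENNReal.ofReal (M ^ ((β:ℝ) - 1)) * volume (Ioc (0:ℝ) M) := by
          rw [setLIntegral_const]
      _ = ENNReal.ofReal (M ^ ((β:ℝ) - 1)) * ENNReal.ofReal M := by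
          rw [Real.volume_Ioc, sub_zero]
  · -- piece 2
    calc ∫⁻ t in Ioi M, P {a | t < |Y a|} * ENNReal.ofReal (t ^ ((β:ℝ) - 1))
        ≤ ∫⁻ t in Ioi M, ENNReal.ofReal C₀ * ENNReal.ofReal (t ^ ((β:ℝ) - 1 - r)) := by
          refine setLIntegral_mono' measurableSet_Ioi fun t ht => ?_
          have ht0 : 0 < t := lt_trans hM0 ht
          calc P {a | t < |Y a|} * ENNReal.ofReal (t ^ ((β:ℝ) - 1))
              ≤ ENNReal.ofReal (C₀ * t ^ (-r)) * ENNReal.ofReal (t ^ ((β:ℝ) - 1)) :=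
                mul_le_mul_left (htail Y hY hG t ht.le) _
            _ = ENNReal.ofReal C₀ * ENNReal.ofReal (t ^ ((β:ℝ) - 1 - r)) := by
                rw [ENNReal.ofReal_mul hC₀, mul_assoc, ← ENNReal.ofReal_mul
                  (rpow_nonneg ht0.le _), ← Real.rpow_add ht0]
                congr 2
                ring_nf
      _ = ENNReal.ofReal C₀ * I2 := by
          rw [hI2def, lintegral_const_mul' _ _ ENNReal.ofReal_ne_top]

/-- For a jointly measurable random field `X` on `ℝ^d` with GEV(η, τ, ξ) margins and a
positive integer `β` with `βξ < 1`, almost surely the sample path `x ↦ X(x,ω)^β` is locally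
Lebesgue-integrable on `ℝ^d`. -/
theorem stmt12 {Ω : Type*} [MeasurableSpace Ω] (P : Measure Ω) [IsProbabilityMeasure P]
    (d : ℕ) (hd : 1 ≤ d)
    (X : EuclideanSpace ℝ (Fin d) → Ω → ℝ)
    (hX : Measurable (Function.uncurry X))
    (η τ ξ : ℝ) (hτ : 0 < τ) (hξ : ξ ≠ 0)
    (hGEV : ∀ x, IsGEV P (X x) η τ ξ)
    (β : ℕ) (hβ : 0 < β) (hβξ : (β : ℝ) * ξ < 1) :
    ∀ᵐ ω ∂P, LocallyIntegrable (fun x => X x ω ^ β)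
      (volume : Measure (EuclideanSpace ℝ (Fin d))) := by
  obtain ⟨C, hC, hmom⟩ := gev_moment P η τ ξ hτ hξ β hβ hβξ
  have hYm : ∀ x, Measurable (X x) := fun x => hX.comp measurable_prodMk_left
  have hsec : ∀ ω, Measurable (fun x => X x ω) := fun ω =>
    hX.comp (measurable_id.prodMk measurable_const)
  have hjoint : Measurable (fun p : Ω × EuclideanSpace ℝ (Fin d) =>
      ENNReal.ofReal ‖X p.2 p.1 ^ β‖) :=
    (((hX.comp measurable_swap).pow_const β).norm).ennreal_ofReal
  have key : ∀ n : ℕ, ∀ᵐ ω ∂P,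
      (∫⁻ x in Metric.closedBall (0 : EuclideanSpace ℝ (Fin d)) n,
        ENNReal.ofReal ‖X x ω ^ β‖ ∂volume) < ⊤ := by
    intro n
    apply ae_lt_top
    · exact Measurable.lintegral_prod_right hjoint
    · rw [lintegral_lintegral_swap hjoint.aemeasurable]
      apply ne_of_lt
      calc ∫⁻ x in Metric.closedBall (0 : EuclideanSpace ℝ (Fin d)) n,
            ∫⁻ ω, ENNReal.ofReal ‖X x ω ^ β‖ ∂P ∂volume
          ≤ ∫⁻ _ in Metric.closedBall (0 : EuclideanSpace ℝ (Fin d)) n, C ∂volume :=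
            lintegral_mono' le_rfl fun x => hmom (X x) (hYm x) (hGEV x)
        _ = C * volume (Metric.closedBall (0 : EuclideanSpace ℝ (Fin d)) n) :=
            setLIntegral_const _ _
        _ < ⊤ := ENNReal.mul_lt_top hC.lt_top measure_closedBall_lt_top
  rw [← ae_all_iff] at key
  filter_upwards [key] with ω hω
  rw [locallyIntegrable_iff]
  intro K hK
  obtain ⟨R, hR⟩ := hK.isBounded.subset_closedBall 0
  have hsubn : K ⊆ Metric.closedBall 0 ((⌈R⌉₊ : ℕ) : ℝ) :=
    hR.trans (Metric.closedBall_subset_closedBall (Nat.le_ceil R))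
  refine IntegrableOn.mono_set ?_ hsubn
  constructor
  · exact ((hsec ω).pow_const β).aestronglyMeasurable
  · rw [hasFiniteIntegral_iff_norm]
    exact hω ⌈R⌉₊
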